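/- For n ∈ ℕ with n ≥ 1, set t_n := n!, γ := √2/2, and y_n := √(t_{n+1}² − t_n²γ²). Then y_{n+1} − 1 > t_{n+1} for all n ≥ 1, and the point t_n γ + i y_n lies on the circle of radius t_{n+1} centered at the origin; moreover, with θ_n := (1 − √(1 − 1/(2(n+1)²)))·4(n+1)², one has θ_n → 1 as n → ∞. -/

import Mathlib

open Complex

noncomputable def tseq (n : ℕ) : ℝ := (Nat.factorial n : ℝ)

noncomputable def yseq (n : ℕ) : ℝ :=
  Real.sqrt (tseq (n + 1) ^ 2 - tseq n ^ 2 * (Real.sqrt 2 / 2) ^ 2)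

lemma tseq_pos (n : ℕ) : 0 < tseq n := by
  simp only [tseq]
  exact_mod_cast Nat.factorial_pos n

lemma tseq_succ (n : ℕ) : tseq (n + 1) = (n + 1) * tseq n := by
  simp only [tseq, Nat.factorial_succ]
  push_cast
  ring

lemma gamma_sq : (Real.sqrt 2 / 2) ^ 2 = 1 / 2 := by
  rw [div_pow, Real.sq_sqrt (by norm_num : (2:ℝ) ≥ 0)]; norm_num

lemma yseq_sq (n : ℕ) : yseq n ^ 2 = tseq (n + 1) ^ 2 - tseq n ^ 2 / 2 := by
  have h1 : tseq n ≤ tseq (n + 1) := by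
    rw [tseq_succ]
    nlinarith [tseq_pos n, (Nat.cast_nonneg n : (0:ℝ) ≤ (n:ℝ))]
  have h0 := tseq_pos n
  rw [yseq, Real.sq_sqrt (by rw [gamma_sq]; nlinarith), gamma_sq]; ring

theorem stmt_19 :
    (∀ n : ℕ, 1 ≤ n → tseq (n + 1) < yseq (n + 1) - 1) ∧
    (∀ n : ℕ, 1 ≤ n →
      ‖((tseq n * (Real.sqrt 2 / 2) : ℝ) + yseq n * I : ℂ)‖ = tseq (n + 1)) ∧
    Filter.Tendsto
      (fun n : ℕ => (1 - Real.sqrt (1 - 1 / (2 * (n + 1) ^ 2))) * (4 * (n + 1) ^ 2))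
      Filter.atTop (nhds 1) := by
  refine ⟨?_, ?_, ?_⟩
  · intro n hn
    have hcast : (1:ℝ) ≤ (n:ℝ) := by exact_mod_cast hn
    have ht : 2 ≤ tseq (n + 1) := by
      have : (2:ℝ) ≤ ((n+1).factorial : ℝ) := by
        exact_mod_cast Nat.succ_le_of_lt (Nat.one_lt_factorial.mpr (by omega))
      simpa [tseq] using this
    have hy : yseq (n + 1) ^ 2 = tseq (n + 2) ^ 2 - tseq (n + 1) ^ 2 / 2 := yseq_sq (n + 1)
    have hs : tseq (n + 2) = ((n:ℝ) + 2) * tseq (n + 1) := by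
      have := tseq_succ (n + 1); push_cast at this ⊢; linarith
    have h9 : 9 * tseq (n + 1) ^ 2 ≤ (((n:ℝ) + 2) * tseq (n + 1)) ^ 2 := by
      have : (0:ℝ) ≤ (((n:ℝ) + 2) ^ 2 - 9) * tseq (n + 1) ^ 2 :=
        mul_nonneg (by nlinarith) (sq_nonneg _)
      nlinarith
    have hsq : (tseq (n + 1) + 1) ^ 2 < yseq (n + 1) ^ 2 := by
      rw [hy, hs]; nlinarith
    have hy0 : 0 ≤ yseq (n + 1) := Real.sqrt_nonneg _
    nlinarith
  · intro n hn
    rw [Complex.norm_add_mul_I, yseq_sq, mul_pow, gamma_sq]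
    have h := tseq_pos (n + 1)
    have : tseq n ^ 2 * (1 / 2) + (tseq (n + 1) ^ 2 - tseq n ^ 2 / 2) =
        tseq (n + 1) ^ 2 := by ring
    rw [this, Real.sqrt_sq h.le]
  · have hu : Filter.Tendsto (fun n : ℕ => 1 / (2 * ((n:ℝ) + 1) ^ 2))
        Filter.atTop (nhds 0) := by
      simp only [one_div]
      apply Filter.Tendsto.inv_tendsto_atTop
      apply Filter.tendsto_atTop_mono (f := fun n : ℕ => (n:ℝ))
      · intro n; nlinarith [(Nat.cast_nonneg n : (0:ℝ) ≤ (n:ℝ))]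
      · exact tendsto_natCast_atTop_atTop
    have h10 : Filter.Tendsto (fun n : ℕ => 1 - 1 / (2 * ((n:ℝ) + 1) ^ 2))
        Filter.atTop (nhds 1) := by
      simpa using Filter.Tendsto.const_sub (1:ℝ) hu
    have hs : Filter.Tendsto (fun n : ℕ => Real.sqrt (1 - 1 / (2 * ((n:ℝ) + 1) ^ 2)))
        Filter.atTop (nhds 1) := by
      have := (Real.continuous_sqrt.tendsto 1).comp h10
      simpa [Real.sqrt_one, Function.comp_def] using this
    have h2 : Filter.Tendsto (fun n : ℕ => 1 + Real.sqrt (1 - 1 / (2 * ((n:ℝ) + 1) ^ 2)))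
        Filter.atTop (nhds 2) := by
      simpa only [one_add_one_eq_two] using Filter.Tendsto.const_add (1:ℝ) hs
    have hg : Filter.Tendsto
        (fun n : ℕ => 2 / (1 + Real.sqrt (1 - 1 / (2 * ((n:ℝ) + 1) ^ 2))))
        Filter.atTop (nhds 1) := by
      have := Filter.Tendsto.div (tendsto_const_nhds (x := (2:ℝ))) h2 (by norm_num)
      simpa only [show (2:ℝ)/2 = 1 from by norm_num, Pi.div_def] using this
    refine hg.congr fun n => ?_
    have hn2 : (1:ℝ) ≤ 2 * ((n:ℝ) + 1) ^ 2 := by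
      nlinarith [(Nat.cast_nonneg n : (0:ℝ) ≤ (n:ℝ))]
    set u : ℝ := 1 / (2 * ((n:ℝ) + 1) ^ 2) with hu'
    have hu0 : 0 < u := by rw [hu']; positivity
    have hu1 : u ≤ 1 := by rw [hu', div_le_one (by positivity)]; linarith
    set s := Real.sqrt (1 - u) with hs'
    have hs0 : 0 ≤ s := Real.sqrt_nonneg _
    have hssq : s ^ 2 = 1 - u := Real.sq_sqrt (by linarith)
    have h1s : 0 < 1 + s := by linarith
    have key : (1 - s) * (1 + s) = u := by nlinarith
    have hux : u * (4 * ((n:ℝ) + 1) ^ 2) = 2 := by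
      rw [hu']; field_simp; ring
    rw [div_eq_iff h1s.ne']
    linear_combination (-1:ℝ) * hux - (4 * ((n:ℝ) + 1) ^ 2) * key
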